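/- Assume f and f̃ are Lipschitz on X × Y, g̃ is Lipschitz on X × Y, the Slater condition holds with constant G > 0, the error-bound assumption holds with constants θ̄ > 0 and function ω, and for each k the penalized bilevel problem with parameter μ_k attains its optimal value f*_{μ_k}. Let (ρ_k), (μ_k), (ε_k) be sequences of positive reals with ρ_k → ∞, μ_k → ∞, ε_k → 0, and for each k let (x^k, y^k, z^k) ∈ X × Y × Y be an ε_k-optimal solution of the minimax problem min_{(x,y)∈X×Y} max_{z∈Y} P_{ρ_k,μ_k}(x,y,z). If (x^k, y^k) converges to (x̄, ȳ), then g̃(x̄, ȳ) ≤ 0 componentwise, f̃(x̄, ȳ) = f̃*(x̄), and f(x̄, ȳ) = f*; that is, every accumulation point of (x^k, y^k) is an optimal solution of the constrained bilevel problem. -/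

import Mathlib

noncomputable section

open Set

open scoped RealInnerProductSpace

/-- Euclidean space `ℝⁿ`. -/
abbrev En (n : ℕ) := EuclideanSpace ℝ (Fin n)

/-- Componentwise positive part `[v]₊` of a vector `v ∈ ℝˡ`. -/
def posPart {l : ℕ} (v : En l) : En l := WithLp.toLp 2 (fun i => max (v i) 0)

/-- The Euclidean distance `‖(x,y) − (x',y')‖` on `ℝⁿ × ℝᵐ`. -/
def prodDist {n m : ℕ} (p q : En n × En m) : ℝ :=
  Real.sqrt (‖p.1 - q.1‖ ^ 2 + ‖p.2 - q.2‖ ^ 2)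

/-- `φ` is `L`-Lipschitz on `X × Y` (with the Euclidean norm on `ℝⁿ × ℝᵐ`). -/
def LipOnXY {n m : ℕ} (φ : En n × En m → ℝ) (L : ℝ)
    (X : Set (En n)) (Y : Set (En m)) : Prop :=
  ∀ p ∈ X ×ˢ Y, ∀ q ∈ X ×ˢ Y, |φ p - φ q| ≤ L * prodDist p q

/-- The Slater condition with constant `G`. -/
def Slater {n m l : ℕ} (gt : En n × En m → En l) (X : Set (En n)) (Y : Set (En m))
    (G : ℝ) : Prop :=
  ∀ x ∈ X, ∃ zhat ∈ Y, ∀ i, gt (x, zhat) i ≤ -G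

/-- The lower-level value function `f̃*(x) = inf { f̃(x,z) : z ∈ Y, g̃(x,z) ≤ 0 }`. -/
def ftStar {n m l : ℕ} (ft : En n × En m → ℝ) (gt : En n × En m → En l)
    (Y : Set (En m)) (x : En n) : ℝ :=
  sInf {v | ∃ z ∈ Y, (∀ i, gt (x, z) i ≤ 0) ∧ v = ft (x, z)}

/-- `f̃*_hi = sup_{x ∈ X} f̃*(x)`. -/
def ftStarHi {n m l : ℕ} (ft : En n × En m → ℝ) (gt : En n × En m → En l)
    (X : Set (En n)) (Y : Set (En m)) : ℝ :=
  sSup {v | ∃ x ∈ X, v = ftStar ft gt Y x}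

/-- `f̃_low = inf { f̃(x,y) : (x,y) ∈ X × Y }`. -/
def ftLow {n m : ℕ} (ft : En n × En m → ℝ) (X : Set (En n)) (Y : Set (En m)) : ℝ :=
  sInf {v | ∃ x ∈ X, ∃ y ∈ Y, v = ft (x, y)}

/-- `f̃_hi = sup { f̃(x,y) : (x,y) ∈ X × Y }`. -/
def ftHi {n m : ℕ} (ft : En n × En m → ℝ) (X : Set (En n)) (Y : Set (En m)) : ℝ :=
  sSup {v | ∃ x ∈ X, ∃ y ∈ Y, v = ft (x, y)}

/-- `f_low = inf { f(x,y) : (x,y) ∈ X × Y }`. -/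
def fLow {n m : ℕ} (f : En n × En m → ℝ) (X : Set (En n)) (Y : Set (En m)) : ℝ :=
  sInf {v | ∃ x ∈ X, ∃ y ∈ Y, v = f (x, y)}

/-- `g̃_hi = sup { ‖g̃(x,y)‖ : (x,y) ∈ X × Y }`. -/
def gtHi {n m l : ℕ} (gt : En n × En m → En l) (X : Set (En n)) (Y : Set (En m)) : ℝ :=
  sSup {v | ∃ x ∈ X, ∃ y ∈ Y, v = ‖gt (x, y)‖}

/-- The lower-level penalty function `P̃_μ(x,z) = f̃(x,z) + μ ‖[g̃(x,z)]₊‖²`. -/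
def Ptilde {n m l : ℕ} (ft : En n × En m → ℝ) (gt : En n × En m → En l)
    (μ : ℝ) (x : En n) (z : En m) : ℝ :=
  ft (x, z) + μ * ‖posPart (gt (x, z))‖ ^ 2

/-- `inf_{z ∈ Y} P̃_μ(x,z)`. -/
def PtildeMinVal {n m l : ℕ} (ft : En n × En m → ℝ) (gt : En n × En m → En l)
    (Y : Set (En m)) (μ : ℝ) (x : En n) : ℝ :=
  sInf {w | ∃ z ∈ Y, w = Ptilde ft gt μ x z}

/-- The minimax penalty function `P_{ρ,μ}(x,y,z) = f(x,y) + ρ (P̃_μ(x,y) − P̃_μ(x,z))`. -/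
def Prhomu {n m l : ℕ} (f ft : En n × En m → ℝ) (gt : En n × En m → En l)
    (ρ μ : ℝ) (x : En n) (y z : En m) : ℝ :=
  f (x, y) + ρ * (Ptilde ft gt μ x y - Ptilde ft gt μ x z)

/-- `sup_{z ∈ Y} P_{ρ,μ}(x,y,z)`. -/
def maxPc {n m l : ℕ} (f ft : En n × En m → ℝ) (gt : En n × En m → En l)
    (Y : Set (En m)) (ρ μ : ℝ) (x : En n) (y : En m) : ℝ :=
  sSup {v | ∃ z ∈ Y, v = Prhomu f ft gt ρ μ x y z}

/-- `inf_{(x,y)∈X×Y} sup_{z∈Y} P_{ρ,μ}(x,y,z)`. -/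
def minimaxValc {n m l : ℕ} (f ft : En n × En m → ℝ) (gt : En n × En m → En l)
    (X : Set (En n)) (Y : Set (En m)) (ρ μ : ℝ) : ℝ :=
  sInf {v | ∃ x ∈ X, ∃ y ∈ Y, v = maxPc f ft gt Y ρ μ x y}

/-- `(x,y,z)` is an ε-optimal solution of `min_{(x,y)∈X×Y} max_{z∈Y} P_{ρ,μ}(x,y,z)`. -/
def epsOptimalc {n m l : ℕ} (f ft : En n × En m → ℝ) (gt : En n × En m → En l)
    (X : Set (En n)) (Y : Set (En m)) (ρ μ ε : ℝ) (x : En n) (y z : En m) : Prop :=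
  maxPc f ft gt Y ρ μ x y - Prhomu f ft gt ρ μ x y z ≤ ε ∧
  Prhomu f ft gt ρ μ x y z - minimaxValc f ft gt X Y ρ μ ≤ ε

/-- The constrained bilevel optimal value
`f* = inf { f(x,y) : x ∈ X, y ∈ Y, g̃(x,y) ≤ 0, f̃(x,y) = f̃*(x) }`. -/
def fStarC {n m l : ℕ} (f ft : En n × En m → ℝ) (gt : En n × En m → En l)
    (X : Set (En n)) (Y : Set (En m)) : ℝ :=
  sInf {v | ∃ x ∈ X, ∃ y ∈ Y,
    (∀ i, gt (x, y) i ≤ 0) ∧ ft (x, y) = ftStar ft gt Y x ∧ v = f (x, y)}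

/-- The penalized bilevel optimal value
`f*_μ = inf { f(x,y) : x ∈ X, y ∈ Y, P̃_μ(x,y) = inf_{z∈Y} P̃_μ(x,z) }`. -/
def fStarMu {n m l : ℕ} (f ft : En n × En m → ℝ) (gt : En n × En m → En l)
    (X : Set (En n)) (Y : Set (En m)) (μ : ℝ) : ℝ :=
  sInf {v | ∃ x ∈ X, ∃ y ∈ Y, Ptilde ft gt μ x y = PtildeMinVal ft gt Y μ x ∧ v = f (x, y)}

/-- The set `S_θ(x)` of θ-approximately feasible lower-level minimizers. -/
def Sθ {n m l : ℕ} (ft : En n × En m → ℝ) (gt : En n × En m → En l)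
    (Y : Set (En m)) (θ : ℝ) (x : En n) : Set (En m) :=
  {z | z ∈ Y ∧ ‖posPart (gt (x, z))‖ ≤ θ ∧
    ft (x, z) = sInf {w | ∃ z' ∈ Y, ‖posPart (gt (x, z'))‖ ≤ θ ∧ w = ft (x, z')}}

/-- The error-bound assumption with constants `θbar` and function `ω`. -/
def ErrorBound {n m l : ℕ} (ft : En n × En m → ℝ) (gt : En n × En m → En l)
    (X : Set (En n)) (Y : Set (En m)) (θbar : ℝ) (ω : ℝ → ℝ) : Prop :=
  0 < θbar ∧ (∀ t, 0 ≤ t → 0 ≤ ω t) ∧ (∀ a b, 0 ≤ a → a ≤ b → ω a ≤ ω b) ∧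
    Filter.Tendsto ω (nhdsWithin 0 (Set.Ioi 0)) (nhds 0) ∧
    ∀ x ∈ X, ∀ z ∈ Sθ ft gt Y 0 x, ∀ θ ∈ Set.Icc 0 θbar,
      Metric.infDist z (Sθ ft gt Y θ x) ≤ ω θ


namespace BL

lemma norm_posPart_nonneg {l : ℕ} (v : En l) : 0 ≤ ‖posPart v‖ := norm_nonneg _

lemma posPart_eq_zero_iff {l : ℕ} (v : En l) : ‖posPart v‖ = 0 ↔ ∀ i, v i ≤ 0 := by
  rw [norm_eq_zero]
  constructor
  · intro h i
    have h2 : max (v i) 0 = 0 := congrArg (fun w : En l => w i) h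
    rw [max_eq_right_iff] at h2
    · exact h2
  · intro h
    refine PiLp.ext fun i => ?_
    show max (v i) 0 = 0
    exact max_eq_right (h i)

lemma coord_le_norm_posPart {l : ℕ} (v : En l) (i : Fin l) : v i ≤ ‖posPart v‖ := by
  calc v i ≤ max (v i) 0 := le_max_left _ _
    _ = |_root_.posPart v i| := (abs_of_nonneg (le_max_right _ _)).symm
    _ ≤ ‖posPart v‖ := by
        have := EuclideanSpace.norm_eq (posPart v)
        have h1 : |_root_.posPart v i| = Real.sqrt (|_root_.posPart v i| ^ 2) := by
          rw [Real.sqrt_sq (abs_nonneg _)]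
        rw [h1, this]
        apply Real.sqrt_le_sqrt
        have h2 : ‖_root_.posPart v i‖ ^ 2 = |_root_.posPart v i| ^ 2 := by
          simp [Real.norm_eq_abs]
        rw [← h2]
        exact Finset.single_le_sum (f := fun j => ‖_root_.posPart v j‖ ^ 2)
          (fun j _ => by positivity) (Finset.mem_univ i)

lemma posPart_lipschitz {l : ℕ} (u v : En l) : ‖posPart u - posPart v‖ ≤ ‖u - v‖ := by
  rw [EuclideanSpace.norm_eq, EuclideanSpace.norm_eq]
  apply Real.sqrt_le_sqrt
  apply Finset.sum_le_sum
  intro i _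
  have h1 : ‖(_root_.posPart u - _root_.posPart v) i‖ ≤ ‖(u - v) i‖ := by
    simp only [PiLp.sub_apply, Real.norm_eq_abs]
    show |max (u i) 0 - max (v i) 0| ≤ _
    exact abs_max_sub_max_le_abs _ _ _
  have := norm_nonneg ((_root_.posPart u - _root_.posPart v) i)
  nlinarith [norm_nonneg ((u - v) i)]

lemma prodDist_nonneg {n m : ℕ} (p q : En n × En m) : 0 ≤ prodDist p q := Real.sqrt_nonneg _

lemma prodDist_same_left {n m : ℕ} (x : En n) (y z : En m) :
    prodDist (x, y) (x, z) = ‖y - z‖ := by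
  simp [prodDist, Real.sqrt_sq (norm_nonneg _)]

lemma prodDist_same_right {n m : ℕ} (x x' : En n) (y : En m) :
    prodDist (x, y) (x', y) = ‖x - x'‖ := by
  simp [prodDist, Real.sqrt_sq (norm_nonneg _)]

lemma fst_le_prodDist {n m : ℕ} (p q : En n × En m) : ‖p.1 - q.1‖ ≤ prodDist p q := by
  rw [show ‖p.1 - q.1‖ = Real.sqrt (‖p.1 - q.1‖ ^ 2) from (Real.sqrt_sq (norm_nonneg _)).symm]
  exact Real.sqrt_le_sqrt (by nlinarith [norm_nonneg (p.2 - q.2)])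

lemma prodDist_le_add {n m : ℕ} (p q : En n × En m) :
    prodDist p q ≤ ‖p.1 - q.1‖ + ‖p.2 - q.2‖ := by
  rw [show ‖p.1 - q.1‖ + ‖p.2 - q.2‖ = Real.sqrt ((‖p.1 - q.1‖ + ‖p.2 - q.2‖) ^ 2) from
    (Real.sqrt_sq (by positivity)).symm]
  exact Real.sqrt_le_sqrt (by nlinarith [norm_nonneg (p.1 - q.1), norm_nonneg (p.2 - q.2)])

lemma prodDist_comm {n m : ℕ} (p q : En n × En m) : prodDist p q = prodDist q p := by
  unfold prodDist
  rw [norm_sub_rev p.1 q.1, norm_sub_rev p.2 q.2]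

end BL

namespace BL


variable {n m l : ℕ} {X : Set (En n)} {Y : Set (En m)}
  {f ft : En n × En m → ℝ} {gt : En n × En m → En l}

lemma continuous_posPart {l : ℕ} : Continuous (posPart : En l → En l) := by
  apply (LipschitzWith.of_dist_le_mul (K := 1) ?_).continuous
  intro u v
  rw [dist_eq_norm, dist_eq_norm]
  simpa using posPart_lipschitz u v

lemma contOn_slice {E : Type*} [TopologicalSpace E]
    {φ : En n × En m → E} (hφ : ContinuousOn φ (X ×ˢ Y)) {x : En n} (hx : x ∈ X) :
    ContinuousOn (fun z => φ (x, z)) Y :=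
  hφ.comp ((continuous_const.prodMk continuous_id).continuousOn)
    (fun _ hz => ⟨hx, hz⟩)

lemma contOn_theta (hgtc : ContinuousOn gt (X ×ˢ Y)) {x : En n} (hx : x ∈ X) :
    ContinuousOn (fun z => ‖posPart (gt (x, z))‖) Y :=
  (continuous_norm.comp continuous_posPart).comp_continuousOn (contOn_slice hgtc hx)

lemma contOn_Ptilde (hftc : ContinuousOn ft (X ×ˢ Y)) (hgtc : ContinuousOn gt (X ×ˢ Y))
    {μ : ℝ} {x : En n} (hx : x ∈ X) :
    ContinuousOn (fun z => Ptilde ft gt μ x z) Y := by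
  apply (contOn_slice hftc hx).add
  exact (continuousOn_const.mul ((contOn_theta hgtc hx).pow 2))

/-- Feasible-value set used in `ftStar`. -/
lemma ftStar_set_nonempty (hfeas : ∀ x ∈ X, ∃ z ∈ Y, ∀ i, gt (x, z) i ≤ 0)
    {x : En n} (hx : x ∈ X) :
    {v | ∃ z ∈ Y, (∀ i, gt (x, z) i ≤ 0) ∧ v = ft (x, z)}.Nonempty := by
  obtain ⟨z, hz, hfz⟩ := hfeas x hx
  exact ⟨ft (x, z), z, hz, hfz, rfl⟩

lemma ftStar_set_bdd {Bft : ℝ} (hBft : ∀ p ∈ X ×ˢ Y, |ft p| ≤ Bft)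
    {x : En n} (hx : x ∈ X) :
    BddBelow {v | ∃ z ∈ Y, (∀ i, gt (x, z) i ≤ 0) ∧ v = ft (x, z)} := by
  refine ⟨-Bft, ?_⟩
  rintro v ⟨z, hz, -, rfl⟩
  have := hBft (x, z) ⟨hx, hz⟩
  exact neg_le_of_abs_le this

lemma ftStar_le {Bft : ℝ} (hBft : ∀ p ∈ X ×ˢ Y, |ft p| ≤ Bft)
    {x : En n} (hx : x ∈ X) {z : En m} (hz : z ∈ Y) (hfz : ∀ i, gt (x, z) i ≤ 0) :
    ftStar ft gt Y x ≤ ft (x, z) :=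
  csInf_le (ftStar_set_bdd hBft hx) ⟨z, hz, hfz, rfl⟩

lemma abs_ftStar_le {Bft : ℝ} (hBft : ∀ p ∈ X ×ˢ Y, |ft p| ≤ Bft)
    (hfeas : ∀ x ∈ X, ∃ z ∈ Y, ∀ i, gt (x, z) i ≤ 0)
    {x : En n} (hx : x ∈ X) : |ftStar ft gt Y x| ≤ Bft := by
  rw [abs_le]
  constructor
  · apply le_csInf (ftStar_set_nonempty hfeas hx)
    rintro v ⟨z, hz, -, rfl⟩
    exact neg_le_of_abs_le (hBft (x, z) ⟨hx, hz⟩)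
  · obtain ⟨z, hz, hfz⟩ := hfeas x hx
    exact (ftStar_le hBft hx hz hfz).trans (le_of_abs_le (hBft (x, z) ⟨hx, hz⟩))

/-- Lemma A: value function bound via Slater. -/
lemma lemA {Bft D Lft G : ℝ} (hBft : ∀ p ∈ X ×ˢ Y, |ft p| ≤ Bft)
    (hYconv : Convex ℝ Y)
    (hgtconv : ∀ x ∈ X, ∀ i, ConvexOn ℝ Y fun z => gt (x, z) i)
    (hLipft : LipOnXY ft Lft X Y) (hLft : 0 ≤ Lft)
    (hslater : Slater gt X Y G) (hG : 0 < G)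
    (hD : ∀ y ∈ Y, ∀ z ∈ Y, ‖y - z‖ ≤ D)
    {x : En n} (hx : x ∈ X) {z : En m} (hz : z ∈ Y) :
    ftStar ft gt Y x ≤ ft (x, z) + (Lft * D / G) * ‖posPart (gt (x, z))‖ := by
  set s := ‖posPart (gt (x, z))‖ with hs_def
  have hs : 0 ≤ s := norm_nonneg _
  obtain ⟨zh, hzh, hslat⟩ := hslater x hx
  set t := s / (s + G) with ht_def
  have hsG : 0 < s + G := by linarith
  have ht0 : 0 ≤ t := div_nonneg hs hsG.le
  have ht1 : t ≤ 1 := by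
    rw [ht_def, div_le_one hsG]; linarith
  set zt := (1 - t) • z + t • zh with hzt_def
  have hzt : zt ∈ Y := hYconv hz hzh (by linarith) ht0 (by ring)
  have hfeas_zt : ∀ i, gt (x, zt) i ≤ 0 := by
    intro i
    have hconv := (hgtconv x hx i).2 hz hzh (by linarith : (0:ℝ) ≤ 1 - t) ht0 (by ring)
    have h1 : gt (x, z) i ≤ s := coord_le_norm_posPart _ i
    have h2 : gt (x, zh) i ≤ -G := hslat i
    have key : (1 - t) * s + t * (-G) = 0 := by
      rw [ht_def]; field_simp; ring
    calc gt (x, zt) i ≤ (1 - t) * gt (x, z) i + t * gt (x, zh) i := hconv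
      _ ≤ (1 - t) * s + t * (-G) := by
          apply add_le_add
          · exact mul_le_mul_of_nonneg_left h1 (by linarith)
          · exact mul_le_mul_of_nonneg_left h2 ht0
      _ = 0 := key
  have h1 : ftStar ft gt Y x ≤ ft (x, zt) := ftStar_le hBft hx hzt hfeas_zt
  have h2 : ft (x, zt) ≤ ft (x, z) + Lft * ‖zt - z‖ := by
    have := hLipft (x, zt) ⟨hx, hzt⟩ (x, z) ⟨hx, hz⟩
    rw [prodDist_same_left] at this
    have := abs_le.mp this
    linarith [this.2]
  have h3 : ‖zt - z‖ = t * ‖zh - z‖ := by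
    have : zt - z = t • (zh - z) := by
      rw [hzt_def]; module
    rw [this, norm_smul, Real.norm_eq_abs, abs_of_nonneg ht0]
  have hD' : ‖zh - z‖ ≤ D := hD zh hzh z hz
  have hD0 : 0 ≤ D := le_trans (norm_nonneg _) hD'
  have h4 : t * ‖zh - z‖ ≤ (s / G) * D := by
    have ht' : t ≤ s / G := by
      rw [ht_def, div_le_div_iff₀ hsG hG]
      nlinarith
    have := mul_le_mul ht' hD' (norm_nonneg _) (div_nonneg hs hG.le)
    linarith
  have : ft (x, zt) ≤ ft (x, z) + (Lft * D / G) * s := by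
    have h5 : Lft * ‖zt - z‖ ≤ (Lft * D / G) * s := by
      rw [h3]
      calc Lft * (t * ‖zh - z‖) ≤ Lft * ((s / G) * D) :=
            mul_le_mul_of_nonneg_left h4 hLft
        _ = (Lft * D / G) * s := by ring
    linarith
  linarith

/-- Lemma B(i): penalized min value is at most the constrained value. -/
lemma PtildeMinVal_set_nonempty (hYne : Y.Nonempty) {μ : ℝ} {x : En n} :
    {w | ∃ z ∈ Y, w = Ptilde ft gt μ x z}.Nonempty := by
  obtain ⟨z, hz⟩ := hYne
  exact ⟨_, z, hz, rfl⟩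

lemma PtildeMinVal_set_bdd {Bft : ℝ} (hBft : ∀ p ∈ X ×ˢ Y, |ft p| ≤ Bft)
    {μ : ℝ} (hμ : 0 ≤ μ) {x : En n} (hx : x ∈ X) :
    BddBelow {w | ∃ z ∈ Y, w = Ptilde ft gt μ x z} := by
  refine ⟨-Bft, ?_⟩
  rintro v ⟨z, hz, rfl⟩
  have h1 := neg_le_of_abs_le (hBft (x, z) ⟨hx, hz⟩)
  have h2 : 0 ≤ μ * ‖posPart (gt (x, z))‖ ^ 2 := by positivity
  unfold Ptilde
  linarith

lemma PtildeMinVal_le {Bft : ℝ} (hBft : ∀ p ∈ X ×ˢ Y, |ft p| ≤ Bft)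
    {μ : ℝ} (hμ : 0 ≤ μ) {x : En n} (hx : x ∈ X) {z : En m} (hz : z ∈ Y) :
    PtildeMinVal ft gt Y μ x ≤ Ptilde ft gt μ x z :=
  csInf_le (PtildeMinVal_set_bdd hBft hμ hx) ⟨z, hz, rfl⟩

lemma PtildeMinVal_le_ftStar {Bft : ℝ} (hBft : ∀ p ∈ X ×ˢ Y, |ft p| ≤ Bft)
    (hfeas : ∀ x ∈ X, ∃ z ∈ Y, ∀ i, gt (x, z) i ≤ 0)
    {μ : ℝ} (hμ : 0 ≤ μ) {x : En n} (hx : x ∈ X) :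
    PtildeMinVal ft gt Y μ x ≤ ftStar ft gt Y x := by
  apply le_csInf (ftStar_set_nonempty hfeas hx)
  rintro v ⟨z, hz, hfz, rfl⟩
  have h1 : Ptilde ft gt μ x z = ft (x, z) := by
    unfold Ptilde
    rw [(posPart_eq_zero_iff _).mpr hfz]
    ring
  rw [← h1]
  exact PtildeMinVal_le hBft hμ hx hz

/-- Lemma B(ii)-(iii): penalized values are not much below `ftStar`. -/
lemma Ptilde_ge {Bft D Lft G : ℝ} (hBft : ∀ p ∈ X ×ˢ Y, |ft p| ≤ Bft)
    (hYconv : Convex ℝ Y)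
    (hgtconv : ∀ x ∈ X, ∀ i, ConvexOn ℝ Y fun z => gt (x, z) i)
    (hLipft : LipOnXY ft Lft X Y) (hLft : 0 ≤ Lft)
    (hslater : Slater gt X Y G) (hG : 0 < G)
    (hD : ∀ y ∈ Y, ∀ z ∈ Y, ‖y - z‖ ≤ D)
    {μ : ℝ} (hμ : 0 < μ) {x : En n} (hx : x ∈ X) {z : En m} (hz : z ∈ Y) :
    ftStar ft gt Y x - (Lft * D / G) ^ 2 / (4 * μ) ≤ Ptilde ft gt μ x z := by
  have hA := lemA hBft hYconv hgtconv hLipft hLft hslater hG hD hx hz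
  set C := Lft * D / G
  set s := ‖posPart (gt (x, z))‖
  have hs : 0 ≤ s := norm_nonneg _
  unfold Ptilde
  have key : 0 ≤ μ * s ^ 2 - C * s + C ^ 2 / (4 * μ) := by
    set q := C ^ 2 / (4 * μ) with hq_def
    have hq : q * (4 * μ) = C ^ 2 := by rw [hq_def]; field_simp
    nlinarith [sq_nonneg (2 * μ * s - C), hμ, hq, sq_nonneg s]
  linarith

end BL

namespace BL2
open BL
open BL
variable {n m l : ℕ} {X : Set (En n)} {Y : Set (En m)}
  {f ft : En n × En m → ℝ} {gt : En n × En m → En l}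

lemma argmin_exists (hYne : Y.Nonempty) (hYcpt : IsCompact Y)
    (hftc : ContinuousOn ft (X ×ˢ Y)) (hgtc : ContinuousOn gt (X ×ˢ Y))
    {μ : ℝ} {x : En n} (hx : x ∈ X) :
    ∃ y0 ∈ Y, IsMinOn (fun z => Ptilde ft gt μ x z) Y y0 :=
  hYcpt.exists_isMinOn hYne (contOn_Ptilde hftc hgtc hx)

lemma PtildeMinVal_eq_of_isMinOn {μ : ℝ} {x : En n} {y0 : En m} (hy0 : y0 ∈ Y)
    (hmin : IsMinOn (fun z => Ptilde ft gt μ x z) Y y0) :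
    PtildeMinVal ft gt Y μ x = Ptilde ft gt μ x y0 := by
  apply le_antisymm
  · refine csInf_le ⟨Ptilde ft gt μ x y0, ?_⟩ ⟨y0, hy0, rfl⟩
    rintro v ⟨z, hz, rfl⟩
    exact hmin hz
  · refine le_csInf ⟨Ptilde ft gt μ x y0, y0, hy0, rfl⟩ ?_
    rintro v ⟨z, hz, rfl⟩
    exact hmin hz

lemma argmin_theta_le {Bft D Lft G : ℝ} (hBft : ∀ p ∈ X ×ˢ Y, |ft p| ≤ Bft)
    (hYconv : Convex ℝ Y)
    (hgtconv : ∀ x ∈ X, ∀ i, ConvexOn ℝ Y fun z => gt (x, z) i)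
    (hLipft : LipOnXY ft Lft X Y) (hLft : 0 ≤ Lft)
    (hslater : Slater gt X Y G) (hG : 0 < G)
    (hD : ∀ y ∈ Y, ∀ z ∈ Y, ‖y - z‖ ≤ D)
    (hfeas : ∀ x ∈ X, ∃ z ∈ Y, ∀ i, gt (x, z) i ≤ 0)
    {μ : ℝ} (hμ : 0 < μ) {x : En n} (hx : x ∈ X) {y0 : En m} (hy0 : y0 ∈ Y)
    (hmin : IsMinOn (fun z => Ptilde ft gt μ x z) Y y0) :
    ‖posPart (gt (x, y0))‖ ≤ (Lft * D / G) / μ := by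
  set C := Lft * D / G with hC_def
  set s0 := ‖posPart (gt (x, y0))‖ with hs0_def
  have hs0 : 0 ≤ s0 := norm_nonneg _
  have h1 : Ptilde ft gt μ x y0 ≤ ftStar ft gt Y x := by
    rw [← PtildeMinVal_eq_of_isMinOn hy0 hmin]
    exact PtildeMinVal_le_ftStar hBft hfeas hμ.le hx
  have h2 : ftStar ft gt Y x ≤ ft (x, y0) + C * s0 :=
    lemA hBft hYconv hgtconv hLipft hLft hslater hG hD hx hy0
  have h3 : μ * s0 ^ 2 ≤ C * s0 := by
    have : ft (x, y0) + μ * s0 ^ 2 ≤ ft (x, y0) + C * s0 := by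
      have := h1.trans h2
      unfold Ptilde at this
      linarith
    linarith
  have hD0 : 0 ≤ D := le_trans (norm_nonneg _) (hD y0 hy0 y0 hy0)
  have hC0 : 0 ≤ C := by positivity
  rcases eq_or_lt_of_le hs0 with h | h
  · rw [← h]; exact div_nonneg hC0 hμ.le
  · rw [le_div_iff₀ hμ]; nlinarith
  
lemma argmin_ft_eq {Bft : ℝ} (hBft : ∀ p ∈ X ×ˢ Y, |ft p| ≤ Bft)
    {μ : ℝ} (hμ : 0 < μ) {x : En n} (hx : x ∈ X) {y0 : En m} (hy0 : y0 ∈ Y)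
    (hmin : IsMinOn (fun z => Ptilde ft gt μ x z) Y y0) :
    ft (x, y0) = sInf {w | ∃ z' ∈ Y, ‖posPart (gt (x, z'))‖ ≤ ‖posPart (gt (x, y0))‖
      ∧ w = ft (x, z')} := by
  apply le_antisymm
  · refine le_csInf ⟨ft (x, y0), y0, hy0, le_refl _, rfl⟩ ?_
    rintro v ⟨z', hz', hθ, rfl⟩
    have h1 : Ptilde ft gt μ x y0 ≤ Ptilde ft gt μ x z' := hmin hz'
    unfold Ptilde at h1
    have hsq : ‖posPart (gt (x, z'))‖ ^ 2 ≤ ‖posPart (gt (x, y0))‖ ^ 2 := by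
      nlinarith [norm_nonneg (posPart (gt (x, z')))]
    have := mul_le_mul_of_nonneg_left hsq hμ.le
    linarith
  · refine csInf_le ⟨-Bft, ?_⟩ ⟨y0, hy0, le_refl _, rfl⟩
    rintro v ⟨z', hz', -, rfl⟩
    exact neg_le_of_abs_le (hBft (x, z') ⟨hx, hz'⟩)


lemma argmin_mem_Sθ {Bft : ℝ} (hBft : ∀ p ∈ X ×ˢ Y, |ft p| ≤ Bft)
    {μ : ℝ} (hμ : 0 < μ) {x : En n} (hx : x ∈ X) {y0 : En m} (hy0 : y0 ∈ Y)
    (hmin : IsMinOn (fun z => Ptilde ft gt μ x z) Y y0) :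
    y0 ∈ Sθ ft gt Y ‖posPart (gt (x, y0))‖ x :=
  ⟨hy0, le_refl _, argmin_ft_eq hBft hμ hx hy0 hmin⟩

lemma Sθ_subset_argmin {Bft : ℝ} (hBft : ∀ p ∈ X ×ˢ Y, |ft p| ≤ Bft)
    {μ : ℝ} (hμ : 0 < μ) {x : En n} (hx : x ∈ X) {y0 : En m} (hy0 : y0 ∈ Y)
    (hmin : IsMinOn (fun z => Ptilde ft gt μ x z) Y y0)
    {w : En m} (hw : w ∈ Sθ ft gt Y ‖posPart (gt (x, y0))‖ x) :
    Ptilde ft gt μ x w = PtildeMinVal ft gt Y μ x := by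
  obtain ⟨hwY, hwθ, hwft⟩ := hw
  have hfteq : ft (x, w) = ft (x, y0) := by
    rw [hwft, ← argmin_ft_eq hBft hμ hx hy0 hmin]
  apply le_antisymm
  · rw [PtildeMinVal_eq_of_isMinOn hy0 hmin]
    unfold Ptilde
    rw [hfteq]
    have : ‖posPart (gt (x, w))‖ ^ 2 ≤ ‖posPart (gt (x, y0))‖ ^ 2 := by
      nlinarith [norm_nonneg (posPart (gt (x, w)))]
    nlinarith
  · rw [PtildeMinVal_eq_of_isMinOn hy0 hmin]
    exact hmin hwY

end BL2

namespace BL3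
open BL BL2
open BL BL2
variable {n m l : ℕ} {X : Set (En n)} {Y : Set (En m)}
  {f ft : En n × En m → ℝ} {gt : En n × En m → En l}

lemma Ptilde_lower {Bft : ℝ} (hBft : ∀ p ∈ X ×ˢ Y, |ft p| ≤ Bft)
    {μ : ℝ} (hμ : 0 ≤ μ) {x : En n} (hx : x ∈ X) {z : En m} (hz : z ∈ Y) :
    -Bft ≤ Ptilde ft gt μ x z := by
  have h1 := neg_le_of_abs_le (hBft (x, z) ⟨hx, hz⟩)
  have h2 : 0 ≤ μ * ‖posPart (gt (x, z))‖ ^ 2 := by positivity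
  unfold Ptilde; linarith

lemma maxPc_eq {Bft : ℝ} (hBft : ∀ p ∈ X ×ˢ Y, |ft p| ≤ Bft) (hYne : Y.Nonempty)
    {ρ μ : ℝ} (hρ : 0 < ρ) (hμ : 0 ≤ μ) {x : En n} (hx : x ∈ X) {y : En m} (hy : y ∈ Y) :
    maxPc f ft gt Y ρ μ x y
      = f (x, y) + ρ * (Ptilde ft gt μ x y - PtildeMinVal ft gt Y μ x) := by
  have hbddA : BddAbove {v | ∃ z ∈ Y, v = Prhomu f ft gt ρ μ x y z} := by
    refine ⟨f (x, y) + ρ * (Ptilde ft gt μ x y + Bft), ?_⟩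
    rintro v ⟨z, hz, rfl⟩
    unfold Prhomu
    have h1 := Ptilde_lower (gt := gt) hBft hμ hx hz
    have h2 : Ptilde ft gt μ x y - Ptilde ft gt μ x z ≤ Ptilde ft gt μ x y + Bft := by
      linarith
    exact add_le_add le_rfl (mul_le_mul_of_nonneg_left h2 hρ.le)
  apply le_antisymm
  · refine csSup_le ⟨Prhomu f ft gt ρ μ x y y, y, hy, rfl⟩ ?_
    rintro v ⟨z, hz, rfl⟩
    unfold Prhomu
    have h3 := PtildeMinVal_le (gt := gt) hBft hμ hx hz
    have : Ptilde ft gt μ x y - Ptilde ft gt μ x z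
        ≤ Ptilde ft gt μ x y - PtildeMinVal ft gt Y μ x := by linarith
    exact add_le_add le_rfl (mul_le_mul_of_nonneg_left this hρ.le)
  · apply le_of_forall_pos_le_add
    intro ε hε
    obtain ⟨w, hwmem, hlt⟩ :=
      Real.lt_sInf_add_pos (PtildeMinVal_set_nonempty hYne (ft := ft) (gt := gt) (μ := μ) (x := x))
        (div_pos hε hρ)
    obtain ⟨z, hz, rfl⟩ := hwmem
    have hle : Prhomu f ft gt ρ μ x y z ≤ maxPc f ft gt Y ρ μ x y :=
      le_csSup hbddA ⟨z, hz, rfl⟩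
    unfold Prhomu at hle
    have hlt' : Ptilde ft gt μ x z < PtildeMinVal ft gt Y μ x + ε / ρ := hlt
    have h4 : ρ * Ptilde ft gt μ x z < ρ * PtildeMinVal ft gt Y μ x + ε := by
      have := mul_lt_mul_of_pos_left hlt' hρ
      rw [mul_add, mul_div_cancel₀ _ hρ.ne'] at this
      linarith
    nlinarith [hle]

lemma maxPc_bddBelow_setpt {Bf Bft : ℝ} (hBf : ∀ p ∈ X ×ˢ Y, |f p| ≤ Bf)
    (hBft : ∀ p ∈ X ×ˢ Y, |ft p| ≤ Bft) (hYne : Y.Nonempty)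
    {ρ μ : ℝ} (hρ : 0 < ρ) (hμ : 0 ≤ μ) {x : En n} (hx : x ∈ X) {y : En m} (hy : y ∈ Y) :
    -Bf ≤ maxPc f ft gt Y ρ μ x y := by
  rw [maxPc_eq hBft hYne hρ hμ hx hy]
  have h2 := PtildeMinVal_le (gt := gt) hBft hμ hx hy
  have h3 := neg_le_of_abs_le (hBf (x, y) ⟨hx, hy⟩)
  nlinarith

lemma minimax_le_attained {Bf Bft : ℝ} (hBf : ∀ p ∈ X ×ˢ Y, |f p| ≤ Bf)
    (hBft : ∀ p ∈ X ×ˢ Y, |ft p| ≤ Bft) (hYne : Y.Nonempty)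
    {ρ μ : ℝ} (hρ : 0 < ρ) (hμ : 0 ≤ μ) {xs : En n} (hxs : xs ∈ X) {ys : En m}
    (hys : ys ∈ Y) (heq : Ptilde ft gt μ xs ys = PtildeMinVal ft gt Y μ xs) :
    minimaxValc f ft gt X Y ρ μ ≤ f (xs, ys) := by
  have h1 : maxPc f ft gt Y ρ μ xs ys = f (xs, ys) := by
    rw [maxPc_eq hBft hYne hρ hμ hxs hys, heq]; ring
  refine le_of_le_of_eq (csInf_le ?_ ⟨xs, hxs, ys, hys, rfl⟩) h1
  refine ⟨-Bf, ?_⟩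
  rintro v ⟨x, hxX, y, hyY, rfl⟩
  exact maxPc_bddBelow_setpt hBf hBft hYne hρ hμ hxX hyY

lemma S0_inf_set_eq {x : En n} :
    {w | ∃ z' ∈ Y, ‖posPart (gt (x, z'))‖ ≤ 0 ∧ w = ft (x, z')}
      = {v | ∃ z ∈ Y, (∀ i, gt (x, z) i ≤ 0) ∧ v = ft (x, z)} := by
  ext v
  constructor
  · rintro ⟨z, hz, hθ, rfl⟩
    exact ⟨z, hz, (posPart_eq_zero_iff _).mp (le_antisymm hθ (norm_nonneg _)), rfl⟩
  · rintro ⟨z, hz, hfz, rfl⟩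
    exact ⟨z, hz, le_of_eq ((posPart_eq_zero_iff _).mpr hfz), rfl⟩

lemma mem_S0 {x : En n} {y : En m} (hy : y ∈ Y) (hfz : ∀ i, gt (x, y) i ≤ 0)
    (hval : ft (x, y) = ftStar ft gt Y x) : y ∈ Sθ ft gt Y 0 x := by
  refine ⟨hy, le_of_eq ((posPart_eq_zero_iff _).mpr hfz), ?_⟩
  rw [S0_inf_set_eq]
  exact hval

lemma fStarC_set_nonempty (hXne : X.Nonempty) (hYcpt : IsCompact Y)
    (hftc : ContinuousOn ft (X ×ˢ Y)) (hgtc : ContinuousOn gt (X ×ˢ Y))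
    (hfeas : ∀ x ∈ X, ∃ z ∈ Y, ∀ i, gt (x, z) i ≤ 0)
    {Bft : ℝ} (hBft : ∀ p ∈ X ×ˢ Y, |ft p| ≤ Bft) :
    {v | ∃ x ∈ X, ∃ y ∈ Y, (∀ i, gt (x, y) i ≤ 0) ∧ ft (x, y) = ftStar ft gt Y x
      ∧ v = f (x, y)}.Nonempty := by
  obtain ⟨x0, hx0⟩ := hXne
  set F := Y ∩ (fun z => ‖posPart (gt (x0, z))‖) ⁻¹' (Iic 0) with hF_def
  have hmemF : ∀ z, z ∈ F ↔ z ∈ Y ∧ ∀ i, gt (x0, z) i ≤ 0 := by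
    intro z
    constructor
    · rintro ⟨hz, hθ⟩
      exact ⟨hz, (posPart_eq_zero_iff _).mp (le_antisymm hθ (norm_nonneg _))⟩
    · rintro ⟨hz, hfz⟩
      exact ⟨hz, le_of_eq ((posPart_eq_zero_iff _).mpr hfz)⟩
  have hFne : F.Nonempty := by
    obtain ⟨z, hz, hfz⟩ := hfeas x0 hx0
    exact ⟨z, (hmemF z).mpr ⟨hz, hfz⟩⟩
  have hFclosed : IsClosed F :=
    (contOn_theta hgtc hx0).preimage_isClosed_of_isClosed hYcpt.isClosed isClosed_Iic
  have hFcpt : IsCompact F := hYcpt.of_isClosed_subset hFclosed inter_subset_left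
  obtain ⟨y0, hy0F, hy0min⟩ := hFcpt.exists_isMinOn hFne
    ((contOn_slice hftc hx0).mono inter_subset_left)
  obtain ⟨hy0Y, hy0feas⟩ := (hmemF y0).mp hy0F
  have hval : ft (x0, y0) = ftStar ft gt Y x0 := by
    apply le_antisymm
    · refine le_csInf (ftStar_set_nonempty hfeas hx0) ?_
      rintro v ⟨z, hz, hfz, rfl⟩
      exact hy0min ((hmemF z).mpr ⟨hz, hfz⟩)
    · exact ftStar_le hBft hx0 hy0Y hy0feas
  exact ⟨f (x0, y0), x0, hx0, y0, hy0Y, hy0feas, hval, rfl⟩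

/-- Lemma D: upper bound on the penalized bilevel value. -/
lemma lemD {Bf Bft D Lft Lf G θbar : ℝ} {ω : ℝ → ℝ}
    (hBf : ∀ p ∈ X ×ˢ Y, |f p| ≤ Bf) (hBft : ∀ p ∈ X ×ˢ Y, |ft p| ≤ Bft)
    (hXne : X.Nonempty) (hYne : Y.Nonempty) (hYcpt : IsCompact Y) (hYconv : Convex ℝ Y)
    (hftc : ContinuousOn ft (X ×ˢ Y)) (hgtc : ContinuousOn gt (X ×ˢ Y))
    (hgtconv : ∀ x ∈ X, ∀ i, ConvexOn ℝ Y fun z => gt (x, z) i)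
    (hLipft : LipOnXY ft Lft X Y) (hLft : 0 ≤ Lft)
    (hLipf : LipOnXY f Lf X Y) (hLf : 0 ≤ Lf)
    (hslater : Slater gt X Y G) (hG : 0 < G)
    (hD : ∀ y ∈ Y, ∀ z ∈ Y, ‖y - z‖ ≤ D)
    (hfeas : ∀ x ∈ X, ∃ z ∈ Y, ∀ i, gt (x, z) i ≤ 0)
    (herr : ErrorBound ft gt X Y θbar ω)
    {μ η : ℝ} (hμ : 0 < μ) (hη : 0 < η)
    (hμbig : (Lft * D / G + 1) / μ ≤ θbar) :
    fStarMu f ft gt X Y μ ≤ fStarC f ft gt X Y + η + Lf * ω ((Lft * D / G + 1) / μ) := by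
  obtain ⟨θbar_pos, hωnn, hωmono, hωtend, hEB⟩ := herr
  set C := Lft * D / G with hC_def
  obtain ⟨v, hvmem, hvlt⟩ :=
    Real.lt_sInf_add_pos (fStarC_set_nonempty hXne hYcpt hftc hgtc hfeas hBft (f := f)) hη
  obtain ⟨x, hx, y, hy, hyfeas, hyval, rfl⟩ := hvmem
  have hvlt' : f (x, y) < fStarC f ft gt X Y + η := hvlt
  have hyS0 : y ∈ Sθ ft gt Y 0 x := mem_S0 hy hyfeas hyval
  obtain ⟨y0, hy0, hmin⟩ := argmin_exists hYne hYcpt hftc hgtc hx (μ := μ)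
  set s0 := ‖posPart (gt (x, y0))‖ with hs0_def
  have hs0nn : 0 ≤ s0 := norm_nonneg _
  have hs0le : s0 ≤ C / μ :=
    argmin_theta_le hBft hYconv hgtconv hLipft hLft hslater hG hD hfeas hμ hx hy0 hmin
  have hCνle : C / μ ≤ (C + 1) / μ := by
    rw [div_le_div_iff₀ hμ hμ]; nlinarith
  have hs0θ : s0 ≤ θbar := hs0le.trans (hCνle.trans hμbig)
  have hEB1 : Metric.infDist y (Sθ ft gt Y s0 x) ≤ ω s0 :=
    hEB x hx y hyS0 s0 ⟨hs0nn, hs0θ⟩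
  have hSne : (Sθ ft gt Y s0 x).Nonempty := ⟨y0, argmin_mem_Sθ hBft hμ hx hy0 hmin⟩
  apply le_of_forall_pos_le_add
  intro ε hε
  have hden : (0:ℝ) < Lf + 1 := by linarith
  set ε2 := ε / (Lf + 1) with hε2_def
  have hε2 : 0 < ε2 := div_pos hε hden
  have hlt : Metric.infDist y (Sθ ft gt Y s0 x) < ω s0 + ε2 := by linarith
  obtain ⟨w, hwS, hdist⟩ := (Metric.infDist_lt_iff hSne).mp hlt
  have hwargmin : Ptilde ft gt μ x w = PtildeMinVal ft gt Y μ x :=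
    Sθ_subset_argmin hBft hμ hx hy0 hmin hwS
  have hwY : w ∈ Y := hwS.1
  have h1 : fStarMu f ft gt X Y μ ≤ f (x, w) := by
    refine csInf_le ⟨-Bf, ?_⟩ ⟨x, hx, w, hwY, hwargmin, rfl⟩
    rintro v ⟨x', hx', y', hy', -, rfl⟩
    exact neg_le_of_abs_le (hBf (x', y') ⟨hx', hy'⟩)
  have h2 : f (x, w) ≤ f (x, y) + Lf * dist y w := by
    have hh := hLipf (x, w) ⟨hx, hwY⟩ (x, y) ⟨hx, hy⟩
    rw [prodDist_same_left] at hh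
    have h3 := (abs_le.mp hh).2
    rw [← dist_eq_norm, dist_comm] at h3
    linarith
  have hωle : ω s0 ≤ ω ((C + 1) / μ) := hωmono s0 _ hs0nn (hs0le.trans hCνle)
  have h4 : Lf * dist y w ≤ Lf * ω ((C + 1) / μ) + Lf * ε2 := by
    have : dist y w ≤ ω ((C + 1) / μ) + ε2 := by linarith
    nlinarith [dist_nonneg (x := y) (y := w)]
  have h5 : Lf * ε2 ≤ ε := by
    rw [hε2_def, mul_comm, div_mul_eq_mul_div, div_le_iff₀ hden]
    nlinarith
  linarith

section Main
open BL BL2 BL3 Filter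

set_option maxHeartbeats 2000000 in
theorem stmt12 {n m l : ℕ} (hn : 0 < n) (hm : 0 < m) (hl : 0 < l)
    (X : Set (En n)) (Y : Set (En m))
    (hXne : X.Nonempty) (hXcpt : IsCompact X)
    (hYne : Y.Nonempty) (hYcpt : IsCompact Y) (hYconv : Convex ℝ Y)
    (f ft : En n × En m → ℝ) (gt : En n × En m → En l)
    (hfc : ContinuousOn f (X ×ˢ Y)) (hftc : ContinuousOn ft (X ×ˢ Y))
    (hgtc : ContinuousOn gt (X ×ˢ Y))
    (hftconv : ∀ x ∈ X, ConvexOn ℝ Y fun z => ft (x, z))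
    (hgtconv : ∀ x ∈ X, ∀ i, ConvexOn ℝ Y fun z => gt (x, z) i)
    (hfeas : ∀ x ∈ X, ∃ z ∈ Y, ∀ i, gt (x, z) i ≤ 0)
    (Lf Lft Lgt G : ℝ) (hLf : 0 ≤ Lf) (hLft : 0 ≤ Lft) (hLgt : 0 ≤ Lgt) (hG : 0 < G)
    (hLipf : LipOnXY f Lf X Y) (hLipft : LipOnXY ft Lft X Y)
    (hLipgt : ∀ p ∈ X ×ˢ Y, ∀ q ∈ X ×ˢ Y, ‖gt p - gt q‖ ≤ Lgt * prodDist p q)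
    (hslater : Slater gt X Y G)
    (θbar : ℝ) (ω : ℝ → ℝ) (herr : ErrorBound ft gt X Y θbar ω)
    (ρseq μseq εseq : ℕ → ℝ)
    (hρpos : ∀ k, 0 < ρseq k) (hμpos : ∀ k, 0 < μseq k) (hεpos : ∀ k, 0 < εseq k)
    (hρtend : Tendsto ρseq atTop atTop) (hμtend : Tendsto μseq atTop atTop)
    (hεtend : Tendsto εseq atTop (nhds 0))
    (hattain : ∀ k, ∃ x ∈ X, ∃ y ∈ Y,
      Ptilde ft gt (μseq k) x y = PtildeMinVal ft gt Y (μseq k) x ∧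
      f (x, y) = fStarMu f ft gt X Y (μseq k))
    (xseq : ℕ → En n) (yseq zseq : ℕ → En m)
    (hxseq : ∀ k, xseq k ∈ X) (hyseq : ∀ k, yseq k ∈ Y) (hzseq : ∀ k, zseq k ∈ Y)
    (hoptseq : ∀ k,
      epsOptimalc f ft gt X Y (ρseq k) (μseq k) (εseq k) (xseq k) (yseq k) (zseq k))
    (xbar : En n) (ybar : En m)
    (hconv : Tendsto (fun k => (xseq k, yseq k)) atTop (nhds (xbar, ybar))) :
    (∀ i, gt (xbar, ybar) i ≤ 0) ∧ ft (xbar, ybar) = ftStar ft gt Y xbar ∧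
      f (xbar, ybar) = fStarC f ft gt X Y := by
  -- bounds from compactness
  have hKcpt : IsCompact (X ×ˢ Y) := hXcpt.prod hYcpt
  obtain ⟨Bf0, hBf0⟩ := hKcpt.exists_bound_of_continuousOn hfc
  obtain ⟨Bft0, hBft0⟩ := hKcpt.exists_bound_of_continuousOn hftc
  have hBf : ∀ p ∈ X ×ˢ Y, |f p| ≤ Bf0 := by
    intro p hp; simpa [Real.norm_eq_abs] using hBf0 p hp
  have hBft : ∀ p ∈ X ×ˢ Y, |ft p| ≤ Bft0 := by
    intro p hp; simpa [Real.norm_eq_abs] using hBft0 p hp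
  obtain ⟨x0, hx0⟩ := id hXne
  obtain ⟨y0', hy0'⟩ := id hYne
  have hBfnn : 0 ≤ Bf0 := (abs_nonneg _).trans (hBf (x0, y0') ⟨hx0, hy0'⟩)
  have hBftnn : 0 ≤ Bft0 := (abs_nonneg _).trans (hBft (x0, y0') ⟨hx0, hy0'⟩)
  obtain ⟨R, hR⟩ := isBounded_iff_forall_norm_le.mp hYcpt.isBounded
  set D := 2 * R with hD_def
  have hD : ∀ y ∈ Y, ∀ z ∈ Y, ‖y - z‖ ≤ D := by
    intro y hy z hz
    calc ‖y - z‖ ≤ ‖y‖ + ‖z‖ := norm_sub_le _ _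
      _ ≤ D := by rw [hD_def]; linarith [hR y hy, hR z hz]
  have hDnn : 0 ≤ D := le_trans (norm_nonneg _) (hD y0' hy0' y0' hy0')
  set C := Lft * D / G with hC_def
  have hC0 : 0 ≤ C := by positivity
  -- limit point in X × Y
  have hxt : Tendsto xseq atTop (nhds xbar) := by
    have := (continuous_fst.tendsto (xbar, ybar)).comp hconv
    simpa [Function.comp_def] using this
  have hyt : Tendsto yseq atTop (nhds ybar) := by
    have := (continuous_snd.tendsto (xbar, ybar)).comp hconv
    simpa [Function.comp_def] using this
  have hxbar : xbar ∈ X :=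
    hXcpt.isClosed.mem_of_tendsto hxt (Eventually.of_forall hxseq)
  have hybar : ybar ∈ Y :=
    hYcpt.isClosed.mem_of_tendsto hyt (Eventually.of_forall hyseq)
  -- distance sequence
  set d : ℕ → ℝ := fun k => prodDist (xseq k, yseq k) (xbar, ybar) with hd_def
  have hdnn : ∀ k, 0 ≤ d k := fun k => prodDist_nonneg _ _
  have hxnt : Tendsto (fun k => ‖xseq k - xbar‖) atTop (nhds 0) :=
    tendsto_iff_norm_sub_tendsto_zero.mp hxt
  have hynt : Tendsto (fun k => ‖yseq k - ybar‖) atTop (nhds 0) :=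
    tendsto_iff_norm_sub_tendsto_zero.mp hyt
  have hdt : Tendsto d atTop (nhds 0) := by
    apply squeeze_zero hdnn (fun k => prodDist_le_add (xseq k, yseq k) (xbar, ybar))
    simpa using hxnt.add hynt
  -- key per-k inequality
  set r : ℕ → ℝ := fun k =>
    Ptilde ft gt (μseq k) (xseq k) (yseq k)
      - PtildeMinVal ft gt Y (μseq k) (xseq k) with hr_def
  have hrnn : ∀ k, 0 ≤ r k := by
    intro k
    have := PtildeMinVal_le (gt := gt) hBft (hμpos k).le (hxseq k) (hyseq k)
    simp only [hr_def]
    linarith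
  have hfmu_le : ∀ k, fStarMu f ft gt X Y (μseq k) ≤ Bf0 := by
    intro k
    obtain ⟨xs, hxs, ys, hys, heq, hval⟩ := hattain k
    rw [← hval]
    exact le_of_abs_le (hBf (xs, ys) ⟨hxs, hys⟩)
  have hkey : ∀ k, f (xseq k, yseq k) + ρseq k * r k
      ≤ fStarMu f ft gt X Y (μseq k) + 2 * εseq k := by
    intro k
    obtain ⟨h1, h2⟩ := hoptseq k
    rw [maxPc_eq hBft hYne (hρpos k) (hμpos k).le (hxseq k) (hyseq k)] at h1
    unfold Prhomu at h1 h2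
    obtain ⟨xs, hxs, ys, hys, heq, hval⟩ := hattain k
    have h3 : minimaxValc f ft gt X Y (ρseq k) (μseq k)
        ≤ fStarMu f ft gt X Y (μseq k) := by
      rw [← hval]
      exact minimax_le_attained hBf hBft hYne (hρpos k) (hμpos k).le hxs hys heq
    simp only [hr_def]
    nlinarith [hrnn k, (hρpos k)]
  -- r k → 0
  have hrub : ∀ k, r k ≤ (2 * Bf0 + 2 * εseq k) / ρseq k := by
    intro k
    rw [le_div_iff₀ (hρpos k)]
    have h4 := hkey k
    have h5 := neg_le_of_abs_le (hBf (xseq k, yseq k) ⟨hxseq k, hyseq k⟩)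
    have h6 := hfmu_le k
    nlinarith
  have hrt : Tendsto r atTop (nhds 0) := by
    apply squeeze_zero hrnn hrub
    have h7 : Tendsto (fun k => (2 * Bf0 + 2 * εseq k)) atTop (nhds (2 * Bf0)) := by
      have := hεtend.const_mul 2
      have := (tendsto_const_nhds (x := 2 * Bf0) (f := atTop (α := ℕ))).add this
      simpa using this
    have h8 : Tendsto (fun k => (ρseq k)⁻¹) atTop (nhds 0) :=
      tendsto_inv_atTop_zero.comp hρtend
    have := h7.mul h8
    simpa [div_eq_mul_inv] using this
  -- constraint violation → 0
  set θs : ℕ → ℝ := fun k => ‖posPart (gt (xseq k, yseq k))‖ with hθs_def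
  have hθnn : ∀ k, 0 ≤ θs k := fun k => norm_nonneg _
  have hθsq : ∀ k, θs k ^ 2 ≤ (2 * Bft0 + r k) / μseq k := by
    intro k
    rw [le_div_iff₀ (hμpos k)]
    have h9 : Ptilde ft gt (μseq k) (xseq k) (yseq k)
        ≤ ftStar ft gt Y (xseq k) + r k := by
      have h10 := PtildeMinVal_le_ftStar (gt := gt) hBft hfeas (hμpos k).le (hxseq k)
      simp only [hr_def]
      linarith
    have h11 := le_of_abs_le (abs_ftStar_le hBft hfeas (hxseq k))
    have h12 := neg_le_of_abs_le (hBft (xseq k, yseq k) ⟨hxseq k, hyseq k⟩)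
    unfold Ptilde at h9
    simp only [hθs_def]
    nlinarith
  have hθt : Tendsto θs atTop (nhds 0) := by
    have hub : ∀ k, θs k ≤ Real.sqrt ((2 * Bft0 + r k) / μseq k) := by
      intro k
      rw [show θs k = Real.sqrt (θs k ^ 2) from (Real.sqrt_sq (hθnn k)).symm]
      exact Real.sqrt_le_sqrt (hθsq k)
    apply squeeze_zero hθnn hub
    have h13 : Tendsto (fun k => (2 * Bft0 + r k) / μseq k) atTop (nhds 0) := by
      have h14 : Tendsto (fun k => (2 * Bft0 + r k)) atTop (nhds (2 * Bft0)) := by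
        have := (tendsto_const_nhds (x := 2 * Bft0) (f := atTop (α := ℕ))).add hrt
        simpa using this
      have h15 : Tendsto (fun k => (μseq k)⁻¹) atTop (nhds 0) :=
        tendsto_inv_atTop_zero.comp hμtend
      have := h14.mul h15
      simpa [div_eq_mul_inv] using this
    have := (Real.continuous_sqrt.tendsto 0).comp h13
    simpa [Function.comp_def] using this
  -- Conclusion 1
  have hconc1 : ∀ i, gt (xbar, ybar) i ≤ 0 := by
    have hbnd : ∀ k, ‖posPart (gt (xbar, ybar))‖ ≤ θs k + Lgt * d k := by
      intro k
      have h16 : ‖posPart (gt (xbar, ybar)) - posPart (gt (xseq k, yseq k))‖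
          ≤ Lgt * d k := by
        refine (posPart_lipschitz _ _).trans ?_
        have := hLipgt (xbar, ybar) ⟨hxbar, hybar⟩ (xseq k, yseq k) ⟨hxseq k, hyseq k⟩
        rw [prodDist_comm] at this
        exact this
      calc ‖posPart (gt (xbar, ybar))‖
          ≤ ‖posPart (gt (xseq k, yseq k))‖
            + ‖posPart (gt (xbar, ybar)) - posPart (gt (xseq k, yseq k))‖ := by
            have h17 := norm_add_le (posPart (gt (xseq k, yseq k)))
              (posPart (gt (xbar, ybar)) - posPart (gt (xseq k, yseq k)))
            simpa using h17
        _ ≤ θs k + Lgt * d k := by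
            simp only [hθs_def]
            linarith [h16]
    have h18 : Tendsto (fun k => θs k + Lgt * d k) atTop (nhds 0) := by
      have := hθt.add ((hdt.const_mul Lgt))
      simpa using this
    have h19 : ‖posPart (gt (xbar, ybar))‖ ≤ 0 := ge_of_tendsto' h18 hbnd
    exact (posPart_eq_zero_iff _).mp (le_antisymm h19 (norm_nonneg _))
  -- Conclusion 2
  have hconc2 : ft (xbar, ybar) = ftStar ft gt Y xbar := by
    apply le_antisymm
    · apply le_of_forall_pos_le_add
      intro η hη
      obtain ⟨v, hvmem, hvlt⟩ :=
        Real.lt_sInf_add_pos (ftStar_set_nonempty hfeas hxbar) hη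
      obtain ⟨zb, hzb, hfzb, rfl⟩ := hvmem
      have hvlt' : ft (xbar, zb) < ftStar ft gt Y xbar + η := hvlt
      have hkbnd : ∀ k, ft (xbar, ybar) - ftStar ft gt Y xbar - η
          ≤ (2 * Lft + C * Lgt) * d k + r k := by
        intro k
        have hxd : ‖xseq k - xbar‖ ≤ d k :=
          fst_le_prodDist (xseq k, yseq k) (xbar, ybar)
        -- ft (xbar,ybar) ≤ ft (xk,yk) + Lft d k
        have e1 : ft (xbar, ybar) ≤ ft (xseq k, yseq k) + Lft * d k := by
          have hh := hLipft (xbar, ybar) ⟨hxbar, hybar⟩ (xseq k, yseq k)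
            ⟨hxseq k, hyseq k⟩
          rw [prodDist_comm] at hh
          linarith [(abs_le.mp hh).2]
        -- ft (xk,yk) ≤ Ptilde ≤ min + r = ... ≤ ftStar xk + r
        have e2 : ft (xseq k, yseq k) ≤ ftStar ft gt Y (xseq k) + r k := by
          have h10 := PtildeMinVal_le_ftStar (gt := gt) hBft hfeas (hμpos k).le (hxseq k)
          have h20 : 0 ≤ μseq k * ‖posPart (gt (xseq k, yseq k))‖ ^ 2 :=
            mul_nonneg (hμpos k).le (sq_nonneg _)
          simp only [hr_def]
          unfold Ptilde
          linarith
        -- ftStar xk ≤ ft (xk, zb) + C θ(xk,zb)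
        have e3 : ftStar ft gt Y (xseq k)
            ≤ ft (xseq k, zb) + C * ‖posPart (gt (xseq k, zb))‖ := by
          rw [hC_def]
          exact lemA hBft hYconv hgtconv hLipft hLft hslater hG hD (hxseq k) hzb
        -- θ(xk, zb) ≤ Lgt ‖xk − xbar‖
        have e4 : ‖posPart (gt (xseq k, zb))‖ ≤ Lgt * d k := by
          have h21 : ‖posPart (gt (xbar, zb))‖ = 0 := (posPart_eq_zero_iff _).mpr hfzb
          have h22 : ‖posPart (gt (xseq k, zb)) - posPart (gt (xbar, zb))‖
              ≤ Lgt * ‖xseq k - xbar‖ := by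
            refine (posPart_lipschitz _ _).trans ?_
            have := hLipgt (xseq k, zb) ⟨hxseq k, hzb⟩ (xbar, zb) ⟨hxbar, hzb⟩
            rw [prodDist_same_right] at this
            exact this
          have h23 : ‖posPart (gt (xseq k, zb))‖
              ≤ ‖posPart (gt (xbar, zb))‖
                + ‖posPart (gt (xseq k, zb)) - posPart (gt (xbar, zb))‖ := by
            have := norm_add_le (posPart (gt (xbar, zb)))
              (posPart (gt (xseq k, zb)) - posPart (gt (xbar, zb)))
            simpa using this
          have h24 : Lgt * ‖xseq k - xbar‖ ≤ Lgt * d k :=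
            mul_le_mul_of_nonneg_left hxd hLgt
          linarith
        -- ft (xk, zb) ≤ ft (xbar, zb) + Lft d k
        have e5 : ft (xseq k, zb) ≤ ft (xbar, zb) + Lft * d k := by
          have hh := hLipft (xseq k, zb) ⟨hxseq k, hzb⟩ (xbar, zb) ⟨hxbar, hzb⟩
          rw [prodDist_same_right] at hh
          have h25 := (abs_le.mp hh).2
          have h26 : Lft * ‖xseq k - xbar‖ ≤ Lft * d k :=
            mul_le_mul_of_nonneg_left hxd hLft
          linarith
        have e6 : C * ‖posPart (gt (xseq k, zb))‖ ≤ C * (Lgt * d k) :=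
          mul_le_mul_of_nonneg_left e4 hC0
        nlinarith [e1, e2, e3, e5, e6]
      have h27 : Tendsto (fun k => (2 * Lft + C * Lgt) * d k + r k) atTop (nhds 0) := by
        have := (hdt.const_mul (2 * Lft + C * Lgt)).add hrt
        simpa using this
      have := ge_of_tendsto' h27 hkbnd
      linarith
    · exact ftStar_le hBft hxbar hybar hconc1
  refine ⟨hconc1, hconc2, ?_⟩
  -- Conclusion 3
  apply le_antisymm
  · -- f (xbar,ybar) ≤ fStarC
    apply le_of_forall_pos_le_add
    intro ε hε
    have hε4 : 0 < ε / 4 := by linarith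
    -- eventually facts
    have hev1 : ∀ᶠ k in atTop, (C + 1) / μseq k ≤ θbar := by
      filter_upwards [hμtend.eventually_ge_atTop ((C + 1) / θbar)] with k hk
      rw [div_le_iff₀ (hμpos k)]
      rw [div_le_iff₀ herr.1] at hk
      nlinarith [herr.1, hμpos k]
    have hinner : Tendsto (fun k => (C + 1) / μseq k) atTop
        (nhdsWithin 0 (Set.Ioi 0)) := by
      rw [tendsto_nhdsWithin_iff]
      constructor
      · have h15 : Tendsto (fun k => (μseq k)⁻¹) atTop (nhds 0) :=
          tendsto_inv_atTop_zero.comp hμtend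
        have := h15.const_mul (C + 1)
        simpa [div_eq_mul_inv] using this
      · exact Eventually.of_forall fun k => div_pos (by linarith) (hμpos k)
    have hev2 : ∀ᶠ k in atTop, Lf * ω ((C + 1) / μseq k) ≤ ε / 4 := by
      have hcomp : Tendsto (fun k => ω ((C + 1) / μseq k)) atTop (nhds 0) :=
        herr.2.2.2.1.comp hinner
      have hden : (0:ℝ) < Lf + 1 := by linarith
      filter_upwards [hcomp.eventually (eventually_lt_nhds (div_pos hε4 hden))]
        with k hk
      have hωnn := herr.2.1 _ (div_pos (by linarith : (0:ℝ) < C + 1) (hμpos k)).le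
      have : Lf * ω ((C + 1) / μseq k) ≤ Lf * (ε / 4 / (Lf + 1)) := by nlinarith
      have h28 : Lf * (ε / 4 / (Lf + 1)) ≤ ε / 4 := by
        rw [mul_comm, div_mul_eq_mul_div, div_le_iff₀ hden]
        nlinarith
      linarith
    have hev3 : ∀ᶠ k in atTop, 2 * εseq k ≤ ε / 4 := by
      filter_upwards [hεtend.eventually (eventually_lt_nhds (by linarith : (0:ℝ) < ε/8))]
        with k hk
      linarith
    have hev4 : ∀ᶠ k in atTop, Lf * d k ≤ ε / 4 := by
      have := hdt.const_mul Lf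
      rw [mul_zero] at this
      filter_upwards [this.eventually (eventually_le_nhds hε4)] with k hk
      exact hk
    obtain ⟨k, ⟨hk1, hk2⟩, hk3, hk4⟩ := ((hev1.and hev2).and (hev3.and hev4)).exists
    -- chain at index k
    have c1 : f (xbar, ybar) ≤ f (xseq k, yseq k) + Lf * d k := by
      have hh := hLipf (xbar, ybar) ⟨hxbar, hybar⟩ (xseq k, yseq k)
        ⟨hxseq k, hyseq k⟩
      rw [prodDist_comm] at hh
      linarith [(abs_le.mp hh).2]
    have c2 : f (xseq k, yseq k) ≤ fStarMu f ft gt X Y (μseq k) + 2 * εseq k := by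
      have := hkey k
      nlinarith [hrnn k, hρpos k]
    have c3 : fStarMu f ft gt X Y (μseq k)
        ≤ fStarC f ft gt X Y + ε / 4 + Lf * ω ((C + 1) / μseq k) := by
      have := lemD hBf hBft ⟨x0, hx0⟩ hYne hYcpt hYconv hftc hgtc hgtconv hLipft hLft
        hLipf hLf hslater hG hD hfeas herr (hμpos k) hε4 ?_
      · rw [← hC_def] at this
        exact this
      · rw [← hC_def]
        exact hk1
    linarith
  · -- fStarC ≤ f (xbar,ybar)
    refine csInf_le ⟨-Bf0, ?_⟩ ⟨xbar, hxbar, ybar, hybar, hconc1, hconc2, rfl⟩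
    rintro v ⟨x', hx', y', hy', -, -, rfl⟩
    exact neg_le_of_abs_le (hBf (x', y') ⟨hx', hy'⟩)

end Main

end BL3

set_option maxHeartbeats 2000000 in
open BL BL2 BL3 in
open Filter in
theorem stmt12 {n m l : ℕ} (hn : 0 < n) (hm : 0 < m) (hl : 0 < l)
    (X : Set (En n)) (Y : Set (En m))
    (hXne : X.Nonempty) (hXcpt : IsCompact X)
    (hYne : Y.Nonempty) (hYcpt : IsCompact Y) (hYconv : Convex ℝ Y)
    (f ft : En n × En m → ℝ) (gt : En n × En m → En l)
    (hfc : ContinuousOn f (X ×ˢ Y)) (hftc : ContinuousOn ft (X ×ˢ Y))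
    (hgtc : ContinuousOn gt (X ×ˢ Y))
    (hftconv : ∀ x ∈ X, ConvexOn ℝ Y fun z => ft (x, z))
    (hgtconv : ∀ x ∈ X, ∀ i, ConvexOn ℝ Y fun z => gt (x, z) i)
    (hfeas : ∀ x ∈ X, ∃ z ∈ Y, ∀ i, gt (x, z) i ≤ 0)
    (Lf Lft Lgt G : ℝ) (hLf : 0 ≤ Lf) (hLft : 0 ≤ Lft) (hLgt : 0 ≤ Lgt) (hG : 0 < G)
    (hLipf : LipOnXY f Lf X Y) (hLipft : LipOnXY ft Lft X Y)
    (hLipgt : ∀ p ∈ X ×ˢ Y, ∀ q ∈ X ×ˢ Y, ‖gt p - gt q‖ ≤ Lgt * prodDist p q)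
    (hslater : Slater gt X Y G)
    (θbar : ℝ) (ω : ℝ → ℝ) (herr : ErrorBound ft gt X Y θbar ω)
    (ρseq μseq εseq : ℕ → ℝ)
    (hρpos : ∀ k, 0 < ρseq k) (hμpos : ∀ k, 0 < μseq k) (hεpos : ∀ k, 0 < εseq k)
    (hρtend : Tendsto ρseq atTop atTop) (hμtend : Tendsto μseq atTop atTop)
    (hεtend : Tendsto εseq atTop (nhds 0))
    -- for each k the penalized bilevel problem with parameter μ_k attains its optimal value
    (hattain : ∀ k, ∃ x ∈ X, ∃ y ∈ Y,
      Ptilde ft gt (μseq k) x y = PtildeMinVal ft gt Y (μseq k) x ∧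
      f (x, y) = fStarMu f ft gt X Y (μseq k))
    (xseq : ℕ → En n) (yseq zseq : ℕ → En m)
    (hxseq : ∀ k, xseq k ∈ X) (hyseq : ∀ k, yseq k ∈ Y) (hzseq : ∀ k, zseq k ∈ Y)
    (hoptseq : ∀ k,
      epsOptimalc f ft gt X Y (ρseq k) (μseq k) (εseq k) (xseq k) (yseq k) (zseq k))
    (xbar : En n) (ybar : En m)
    (hconv : Tendsto (fun k => (xseq k, yseq k)) atTop (nhds (xbar, ybar))) :
    (∀ i, gt (xbar, ybar) i ≤ 0) ∧ ft (xbar, ybar) = ftStar ft gt Y xbar ∧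
      f (xbar, ybar) = fStarC f ft gt X Y := by
  -- bounds from compactness
  have hKcpt : IsCompact (X ×ˢ Y) := hXcpt.prod hYcpt
  obtain ⟨Bf0, hBf0⟩ := hKcpt.exists_bound_of_continuousOn hfc
  obtain ⟨Bft0, hBft0⟩ := hKcpt.exists_bound_of_continuousOn hftc
  have hBf : ∀ p ∈ X ×ˢ Y, |f p| ≤ Bf0 := by
    intro p hp; simpa [Real.norm_eq_abs] using hBf0 p hp
  have hBft : ∀ p ∈ X ×ˢ Y, |ft p| ≤ Bft0 := by
    intro p hp; simpa [Real.norm_eq_abs] using hBft0 p hp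
  obtain ⟨x0, hx0⟩ := id hXne
  obtain ⟨y0', hy0'⟩ := id hYne
  have hBfnn : 0 ≤ Bf0 := (abs_nonneg _).trans (hBf (x0, y0') ⟨hx0, hy0'⟩)
  have hBftnn : 0 ≤ Bft0 := (abs_nonneg _).trans (hBft (x0, y0') ⟨hx0, hy0'⟩)
  obtain ⟨R, hR⟩ := isBounded_iff_forall_norm_le.mp hYcpt.isBounded
  set D := 2 * R with hD_def
  have hD : ∀ y ∈ Y, ∀ z ∈ Y, ‖y - z‖ ≤ D := by
    intro y hy z hz
    calc ‖y - z‖ ≤ ‖y‖ + ‖z‖ := norm_sub_le _ _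
      _ ≤ D := by rw [hD_def]; linarith [hR y hy, hR z hz]
  have hDnn : 0 ≤ D := le_trans (norm_nonneg _) (hD y0' hy0' y0' hy0')
  set C := Lft * D / G with hC_def
  have hC0 : 0 ≤ C := by positivity
  -- limit point in X × Y
  have hxt : Tendsto xseq atTop (nhds xbar) := by
    have := (continuous_fst.tendsto (xbar, ybar)).comp hconv
    simpa [Function.comp_def] using this
  have hyt : Tendsto yseq atTop (nhds ybar) := by
    have := (continuous_snd.tendsto (xbar, ybar)).comp hconv
    simpa [Function.comp_def] using this
  have hxbar : xbar ∈ X :=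
    hXcpt.isClosed.mem_of_tendsto hxt (Eventually.of_forall hxseq)
  have hybar : ybar ∈ Y :=
    hYcpt.isClosed.mem_of_tendsto hyt (Eventually.of_forall hyseq)
  -- distance sequence
  set d : ℕ → ℝ := fun k => prodDist (xseq k, yseq k) (xbar, ybar) with hd_def
  have hdnn : ∀ k, 0 ≤ d k := fun k => prodDist_nonneg _ _
  have hxnt : Tendsto (fun k => ‖xseq k - xbar‖) atTop (nhds 0) :=
    tendsto_iff_norm_sub_tendsto_zero.mp hxt
  have hynt : Tendsto (fun k => ‖yseq k - ybar‖) atTop (nhds 0) :=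
    tendsto_iff_norm_sub_tendsto_zero.mp hyt
  have hdt : Tendsto d atTop (nhds 0) := by
    apply squeeze_zero hdnn (fun k => prodDist_le_add (xseq k, yseq k) (xbar, ybar))
    simpa using hxnt.add hynt
  -- key per-k inequality
  set r : ℕ → ℝ := fun k =>
    Ptilde ft gt (μseq k) (xseq k) (yseq k)
      - PtildeMinVal ft gt Y (μseq k) (xseq k) with hr_def
  have hrnn : ∀ k, 0 ≤ r k := by
    intro k
    have := PtildeMinVal_le (gt := gt) hBft (hμpos k).le (hxseq k) (hyseq k)
    simp only [hr_def]
    linarith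
  have hfmu_le : ∀ k, fStarMu f ft gt X Y (μseq k) ≤ Bf0 := by
    intro k
    obtain ⟨xs, hxs, ys, hys, heq, hval⟩ := hattain k
    rw [← hval]
    exact le_of_abs_le (hBf (xs, ys) ⟨hxs, hys⟩)
  have hkey : ∀ k, f (xseq k, yseq k) + ρseq k * r k
      ≤ fStarMu f ft gt X Y (μseq k) + 2 * εseq k := by
    intro k
    obtain ⟨h1, h2⟩ := hoptseq k
    rw [maxPc_eq hBft hYne (hρpos k) (hμpos k).le (hxseq k) (hyseq k)] at h1
    unfold Prhomu at h1 h2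
    obtain ⟨xs, hxs, ys, hys, heq, hval⟩ := hattain k
    have h3 : minimaxValc f ft gt X Y (ρseq k) (μseq k)
        ≤ fStarMu f ft gt X Y (μseq k) := by
      rw [← hval]
      exact minimax_le_attained hBf hBft hYne (hρpos k) (hμpos k).le hxs hys heq
    simp only [hr_def]
    nlinarith [hrnn k, (hρpos k)]
  -- r k → 0
  have hrub : ∀ k, r k ≤ (2 * Bf0 + 2 * εseq k) / ρseq k := by
    intro k
    rw [le_div_iff₀ (hρpos k)]
    have h4 := hkey k
    have h5 := neg_le_of_abs_le (hBf (xseq k, yseq k) ⟨hxseq k, hyseq k⟩)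
    have h6 := hfmu_le k
    nlinarith
  have hrt : Tendsto r atTop (nhds 0) := by
    apply squeeze_zero hrnn hrub
    have h7 : Tendsto (fun k => (2 * Bf0 + 2 * εseq k)) atTop (nhds (2 * Bf0)) := by
      have := hεtend.const_mul 2
      have := (tendsto_const_nhds (x := 2 * Bf0) (f := atTop (α := ℕ))).add this
      simpa using this
    have h8 : Tendsto (fun k => (ρseq k)⁻¹) atTop (nhds 0) :=
      tendsto_inv_atTop_zero.comp hρtend
    have := h7.mul h8
    simpa [div_eq_mul_inv] using this
  -- constraint violation → 0
  set θs : ℕ → ℝ := fun k => ‖posPart (gt (xseq k, yseq k))‖ with hθs_def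
  have hθnn : ∀ k, 0 ≤ θs k := fun k => norm_nonneg _
  have hθsq : ∀ k, θs k ^ 2 ≤ (2 * Bft0 + r k) / μseq k := by
    intro k
    rw [le_div_iff₀ (hμpos k)]
    have h9 : Ptilde ft gt (μseq k) (xseq k) (yseq k)
        ≤ ftStar ft gt Y (xseq k) + r k := by
      have h10 := PtildeMinVal_le_ftStar (gt := gt) hBft hfeas (hμpos k).le (hxseq k)
      simp only [hr_def]
      linarith
    have h11 := le_of_abs_le (abs_ftStar_le hBft hfeas (hxseq k))
    have h12 := neg_le_of_abs_le (hBft (xseq k, yseq k) ⟨hxseq k, hyseq k⟩)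
    unfold Ptilde at h9
    simp only [hθs_def]
    nlinarith
  have hθt : Tendsto θs atTop (nhds 0) := by
    have hub : ∀ k, θs k ≤ Real.sqrt ((2 * Bft0 + r k) / μseq k) := by
      intro k
      rw [show θs k = Real.sqrt (θs k ^ 2) from (Real.sqrt_sq (hθnn k)).symm]
      exact Real.sqrt_le_sqrt (hθsq k)
    apply squeeze_zero hθnn hub
    have h13 : Tendsto (fun k => (2 * Bft0 + r k) / μseq k) atTop (nhds 0) := by
      have h14 : Tendsto (fun k => (2 * Bft0 + r k)) atTop (nhds (2 * Bft0)) := by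
        have := (tendsto_const_nhds (x := 2 * Bft0) (f := atTop (α := ℕ))).add hrt
        simpa using this
      have h15 : Tendsto (fun k => (μseq k)⁻¹) atTop (nhds 0) :=
        tendsto_inv_atTop_zero.comp hμtend
      have := h14.mul h15
      simpa [div_eq_mul_inv] using this
    have := (Real.continuous_sqrt.tendsto 0).comp h13
    simpa [Function.comp_def] using this
  -- Conclusion 1
  have hconc1 : ∀ i, gt (xbar, ybar) i ≤ 0 := by
    have hbnd : ∀ k, ‖posPart (gt (xbar, ybar))‖ ≤ θs k + Lgt * d k := by
      intro k
      have h16 : ‖posPart (gt (xbar, ybar)) - posPart (gt (xseq k, yseq k))‖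
          ≤ Lgt * d k := by
        refine (posPart_lipschitz _ _).trans ?_
        have := hLipgt (xbar, ybar) ⟨hxbar, hybar⟩ (xseq k, yseq k) ⟨hxseq k, hyseq k⟩
        rw [prodDist_comm] at this
        exact this
      calc ‖posPart (gt (xbar, ybar))‖
          ≤ ‖posPart (gt (xseq k, yseq k))‖
            + ‖posPart (gt (xbar, ybar)) - posPart (gt (xseq k, yseq k))‖ := by
            have h17 := norm_add_le (posPart (gt (xseq k, yseq k)))
              (posPart (gt (xbar, ybar)) - posPart (gt (xseq k, yseq k)))
            simpa using h17
        _ ≤ θs k + Lgt * d k := by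
            simp only [hθs_def]
            linarith [h16]
    have h18 : Tendsto (fun k => θs k + Lgt * d k) atTop (nhds 0) := by
      have := hθt.add ((hdt.const_mul Lgt))
      simpa using this
    have h19 : ‖posPart (gt (xbar, ybar))‖ ≤ 0 := ge_of_tendsto' h18 hbnd
    exact (posPart_eq_zero_iff _).mp (le_antisymm h19 (norm_nonneg _))
  -- Conclusion 2
  have hconc2 : ft (xbar, ybar) = ftStar ft gt Y xbar := by
    apply le_antisymm
    · apply le_of_forall_pos_le_add
      intro η hη
      obtain ⟨v, hvmem, hvlt⟩ :=
        Real.lt_sInf_add_pos (ftStar_set_nonempty hfeas hxbar) hη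
      obtain ⟨zb, hzb, hfzb, rfl⟩ := hvmem
      have hvlt' : ft (xbar, zb) < ftStar ft gt Y xbar + η := hvlt
      have hkbnd : ∀ k, ft (xbar, ybar) - ftStar ft gt Y xbar - η
          ≤ (2 * Lft + C * Lgt) * d k + r k := by
        intro k
        have hxd : ‖xseq k - xbar‖ ≤ d k :=
          fst_le_prodDist (xseq k, yseq k) (xbar, ybar)
        -- ft (xbar,ybar) ≤ ft (xk,yk) + Lft d k
        have e1 : ft (xbar, ybar) ≤ ft (xseq k, yseq k) + Lft * d k := by
          have hh := hLipft (xbar, ybar) ⟨hxbar, hybar⟩ (xseq k, yseq k)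
            ⟨hxseq k, hyseq k⟩
          rw [prodDist_comm] at hh
          linarith [(abs_le.mp hh).2]
        -- ft (xk,yk) ≤ Ptilde ≤ min + r = ... ≤ ftStar xk + r
        have e2 : ft (xseq k, yseq k) ≤ ftStar ft gt Y (xseq k) + r k := by
          have h10 := PtildeMinVal_le_ftStar (gt := gt) hBft hfeas (hμpos k).le (hxseq k)
          have h20 : 0 ≤ μseq k * ‖posPart (gt (xseq k, yseq k))‖ ^ 2 :=
            mul_nonneg (hμpos k).le (sq_nonneg _)
          simp only [hr_def]
          unfold Ptilde
          linarith
        -- ftStar xk ≤ ft (xk, zb) + C θ(xk,zb)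
        have e3 : ftStar ft gt Y (xseq k)
            ≤ ft (xseq k, zb) + C * ‖posPart (gt (xseq k, zb))‖ := by
          rw [hC_def]
          exact lemA hBft hYconv hgtconv hLipft hLft hslater hG hD (hxseq k) hzb
        -- θ(xk, zb) ≤ Lgt ‖xk − xbar‖
        have e4 : ‖posPart (gt (xseq k, zb))‖ ≤ Lgt * d k := by
          have h21 : ‖posPart (gt (xbar, zb))‖ = 0 := (posPart_eq_zero_iff _).mpr hfzb
          have h22 : ‖posPart (gt (xseq k, zb)) - posPart (gt (xbar, zb))‖
              ≤ Lgt * ‖xseq k - xbar‖ := by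
            refine (posPart_lipschitz _ _).trans ?_
            have := hLipgt (xseq k, zb) ⟨hxseq k, hzb⟩ (xbar, zb) ⟨hxbar, hzb⟩
            rw [prodDist_same_right] at this
            exact this
          have h23 : ‖posPart (gt (xseq k, zb))‖
              ≤ ‖posPart (gt (xbar, zb))‖
                + ‖posPart (gt (xseq k, zb)) - posPart (gt (xbar, zb))‖ := by
            have := norm_add_le (posPart (gt (xbar, zb)))
              (posPart (gt (xseq k, zb)) - posPart (gt (xbar, zb)))
            simpa using this
          have h24 : Lgt * ‖xseq k - xbar‖ ≤ Lgt * d k :=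
            mul_le_mul_of_nonneg_left hxd hLgt
          linarith
        -- ft (xk, zb) ≤ ft (xbar, zb) + Lft d k
        have e5 : ft (xseq k, zb) ≤ ft (xbar, zb) + Lft * d k := by
          have hh := hLipft (xseq k, zb) ⟨hxseq k, hzb⟩ (xbar, zb) ⟨hxbar, hzb⟩
          rw [prodDist_same_right] at hh
          have h25 := (abs_le.mp hh).2
          have h26 : Lft * ‖xseq k - xbar‖ ≤ Lft * d k :=
            mul_le_mul_of_nonneg_left hxd hLft
          linarith
        have e6 : C * ‖posPart (gt (xseq k, zb))‖ ≤ C * (Lgt * d k) :=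
          mul_le_mul_of_nonneg_left e4 hC0
        nlinarith [e1, e2, e3, e5, e6]
      have h27 : Tendsto (fun k => (2 * Lft + C * Lgt) * d k + r k) atTop (nhds 0) := by
        have := (hdt.const_mul (2 * Lft + C * Lgt)).add hrt
        simpa using this
      have := ge_of_tendsto' h27 hkbnd
      linarith
    · exact ftStar_le hBft hxbar hybar hconc1
  refine ⟨hconc1, hconc2, ?_⟩
  -- Conclusion 3
  apply le_antisymm
  · -- f (xbar,ybar) ≤ fStarC
    apply le_of_forall_pos_le_add
    intro ε hε
    have hε4 : 0 < ε / 4 := by linarith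
    -- eventually facts
    have hev1 : ∀ᶠ k in atTop, (C + 1) / μseq k ≤ θbar := by
      filter_upwards [hμtend.eventually_ge_atTop ((C + 1) / θbar)] with k hk
      rw [div_le_iff₀ (hμpos k)]
      rw [div_le_iff₀ herr.1] at hk
      nlinarith [herr.1, hμpos k]
    have hinner : Tendsto (fun k => (C + 1) / μseq k) atTop
        (nhdsWithin 0 (Set.Ioi 0)) := by
      rw [tendsto_nhdsWithin_iff]
      constructor
      · have h15 : Tendsto (fun k => (μseq k)⁻¹) atTop (nhds 0) :=
          tendsto_inv_atTop_zero.comp hμtend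
        have := h15.const_mul (C + 1)
        simpa [div_eq_mul_inv] using this
      · exact Eventually.of_forall fun k => div_pos (by linarith) (hμpos k)
    have hev2 : ∀ᶠ k in atTop, Lf * ω ((C + 1) / μseq k) ≤ ε / 4 := by
      have hcomp : Tendsto (fun k => ω ((C + 1) / μseq k)) atTop (nhds 0) :=
        herr.2.2.2.1.comp hinner
      have hden : (0:ℝ) < Lf + 1 := by linarith
      filter_upwards [hcomp.eventually (eventually_lt_nhds (div_pos hε4 hden))]
        with k hk
      have hωnn := herr.2.1 _ (div_pos (by linarith : (0:ℝ) < C + 1) (hμpos k)).le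
      have : Lf * ω ((C + 1) / μseq k) ≤ Lf * (ε / 4 / (Lf + 1)) := by nlinarith
      have h28 : Lf * (ε / 4 / (Lf + 1)) ≤ ε / 4 := by
        rw [mul_comm, div_mul_eq_mul_div, div_le_iff₀ hden]
        nlinarith
      linarith
    have hev3 : ∀ᶠ k in atTop, 2 * εseq k ≤ ε / 4 := by
      filter_upwards [hεtend.eventually (eventually_lt_nhds (by linarith : (0:ℝ) < ε/8))]
        with k hk
      linarith
    have hev4 : ∀ᶠ k in atTop, Lf * d k ≤ ε / 4 := by
      have := hdt.const_mul Lf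
      rw [mul_zero] at this
      filter_upwards [this.eventually (eventually_le_nhds hε4)] with k hk
      exact hk
    obtain ⟨k, ⟨hk1, hk2⟩, hk3, hk4⟩ := ((hev1.and hev2).and (hev3.and hev4)).exists
    -- chain at index k
    have c1 : f (xbar, ybar) ≤ f (xseq k, yseq k) + Lf * d k := by
      have hh := hLipf (xbar, ybar) ⟨hxbar, hybar⟩ (xseq k, yseq k)
        ⟨hxseq k, hyseq k⟩
      rw [prodDist_comm] at hh
      linarith [(abs_le.mp hh).2]
    have c2 : f (xseq k, yseq k) ≤ fStarMu f ft gt X Y (μseq k) + 2 * εseq k := by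
      have := hkey k
      nlinarith [hrnn k, hρpos k]
    have c3 : fStarMu f ft gt X Y (μseq k)
        ≤ fStarC f ft gt X Y + ε / 4 + Lf * ω ((C + 1) / μseq k) := by
      have := lemD hBf hBft ⟨x0, hx0⟩ hYne hYcpt hYconv hftc hgtc hgtconv hLipft hLft
        hLipf hLf hslater hG hD hfeas herr (hμpos k) hε4 ?_
      · rw [← hC_def] at this
        exact this
      · rw [← hC_def]
        exact hk1
    linarith
  · -- fStarC ≤ f (xbar,ybar)
    refine csInf_le ⟨-Bf0, ?_⟩ ⟨xbar, hxbar, ybar, hybar, hconc1, hconc2, rfl⟩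
    rintro v ⟨x', hx', y', hy', -, -, rfl⟩
    exact neg_le_of_abs_le (hBf (x', y') ⟨hx', hy'⟩)
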